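/- Let H be a real Hilbert space, T, A : H → H, B : ℝ^q → H, C : H → ℝ^p bounded linear operators, and ε, γ > 0. Suppose P : H → H is a bounded self-adjoint operator with ⟨x, P x⟩ ≥ ε ‖x‖² for all x ∈ H, such that: (i) 2⟨P T* x, A* x⟩ + ‖B* x‖² ≤ 0 for all x ∈ H (i.e., T P A* + A P T* + B B* ⪯ 0), and (ii) the trace of the linear map C ∘ P ∘ C* : ℝ^p → ℝ^p is at most γ². Assume additionally that for every ū₀ ∈ ℝ^p there exists a differentiable x̄ : [0,∞) → H with T* ẋ̄(t) = A* x̄(t) for all t ≥ 0 and T* x̄(0) = C* ū₀. Then for every u₀ ∈ ℝ^q, every differentiable x : [0,∞) → H with T ẋ(t) = A x(t) for all t ≥ 0 and T x(0) = B u₀ satisfies ∫₀^∞ ‖C x(t)‖² dt ≤ γ² ‖u₀‖². (Theorem 3, Part 3.2: controllability-Gramian LPI bound on the H₂-norm, via duality.) -/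

import Mathlib

open scoped RealInnerProductSpace

set_option maxHeartbeats 1000000
open MeasureTheory Set ContinuousLinearMap

lemma euclidean_trace_eq_sum_inner {p : ℕ}
    (f : EuclideanSpace ℝ (Fin p) →ₗ[ℝ] EuclideanSpace ℝ (Fin p)) :
    LinearMap.trace ℝ (EuclideanSpace ℝ (Fin p)) f =
      ∑ i, ⟪(EuclideanSpace.basisFun (Fin p) ℝ) i, f ((EuclideanSpace.basisFun (Fin p) ℝ) i)⟫ := by
  rw [LinearMap.trace_eq_matrix_trace ℝ (EuclideanSpace.basisFun (Fin p) ℝ).toBasis f,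
    Matrix.trace]
  simp [Matrix.diag, LinearMap.toMatrix_apply,
    OrthonormalBasis.coe_toBasis_repr_apply, OrthonormalBasis.repr_apply_apply]

/-- **Theorem 3, Part 3.2 (controllability-Gramian LPI bound on the `H₂`-norm, via duality).**
If `P ⪰ εI` is self-adjoint with `T P A* + A P T* + B B* ⪯ 0` and `trace(C P C*) ≤ γ²`, and
dual solutions with initial data `C* ū₀` exist, then every solution of `Σ(T,A)` with initial
datum `B u₀` satisfies `∫₀^∞ ‖C x(t)‖² dt ≤ γ² ‖u₀‖²`. -/
theorem pie_H2_norm_bound_controllability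
    {H : Type*} [NormedAddCommGroup H] [InnerProductSpace ℝ H] [CompleteSpace H]
    (q p : ℕ) (T A : H →L[ℝ] H)
    (B : EuclideanSpace ℝ (Fin q) →L[ℝ] H) (C : H →L[ℝ] EuclideanSpace ℝ (Fin p))
    (ε γ : ℝ) (hε : 0 < ε) (hγ : 0 < γ)
    (P : H →L[ℝ] H) (hPsa : IsSelfAdjoint P)
    (hPpos : ∀ x : H, ε * ‖x‖ ^ 2 ≤ ⟪x, P x⟫)
    (hLPI : ∀ x : H,
      2 * ⟪P (ContinuousLinearMap.adjoint T x), ContinuousLinearMap.adjoint A x⟫ +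
        ‖ContinuousLinearMap.adjoint B x‖ ^ 2 ≤ 0)
    (htrace :
      LinearMap.trace ℝ (EuclideanSpace ℝ (Fin p))
        ((C ∘L P ∘L ContinuousLinearMap.adjoint C).toLinearMap) ≤ γ ^ 2)
    (hdual_exist : ∀ ub₀ : EuclideanSpace ℝ (Fin p), ∃ xb xb' : ℝ → H,
      (∀ t : ℝ, 0 ≤ t → HasDerivAt xb (xb' t) t) ∧
      (∀ t : ℝ, 0 ≤ t →
        ContinuousLinearMap.adjoint T (xb' t) = ContinuousLinearMap.adjoint A (xb t)) ∧
      ContinuousLinearMap.adjoint T (xb 0) = ContinuousLinearMap.adjoint C ub₀) :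
    ∀ (u₀ : EuclideanSpace ℝ (Fin q)) (x x' : ℝ → H),
      (∀ t : ℝ, 0 ≤ t → HasDerivAt x (x' t) t) →
      (∀ t : ℝ, 0 ≤ t → T (x' t) = A (x t)) →
      T (x 0) = B u₀ →
      (∫ t in Set.Ioi (0 : ℝ), ‖C (x t)‖ ^ 2) ≤ γ ^ 2 * ‖u₀‖ ^ 2 := by
  intro u₀ x x' hx hxeq hx0
  set T' := ContinuousLinearMap.adjoint T with hT'def
  set A' := ContinuousLinearMap.adjoint A with hA'def
  set B' := ContinuousLinearMap.adjoint B with hB'def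
  set C' := ContinuousLinearMap.adjoint C with hC'def
  set e := EuclideanSpace.basisFun (Fin p) ℝ with hedef
  -- choose dual solutions for each basis vector
  choose xb xb' hder hTeq hinit using fun i : Fin p => hdual_exist (e i)
  have hPinner : ∀ w z : H, ⟪P w, z⟫ = ⟪w, P z⟫ := by
    intro w z
    conv_lhs => rw [← hPsa.adjoint_eq]
    exact ContinuousLinearMap.adjoint_inner_left P z w
  -- continuity facts
  have hxbcont : ∀ i, ContinuousOn (xb i) (Ici (0:ℝ)) := fun i t ht =>
    ((hder i t ht).continuousAt).continuousWithinAt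
  have hxcont : ContinuousOn x (Ici (0:ℝ)) := fun t ht =>
    ((hx t ht).continuousAt).continuousWithinAt
  -- Step 1: dual Gramian bound
  have hGram : ∀ (i : Fin p) (τ : ℝ), 0 ≤ τ →
      (∫ t in (0:ℝ)..τ, ‖B' (xb i t)‖ ^ 2) ≤ ⟪C' (e i), P (C' (e i))⟫ := by
    intro i τ hτ
    set V : ℝ → ℝ := fun t => ⟪T' (xb i t), P (T' (xb i t))⟫ with hVdef
    set g : ℝ → ℝ := fun t => ⟪T' (xb i t), P (A' (xb i t))⟫ + ⟪A' (xb i t), P (T' (xb i t))⟫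
      with hgdef
    have hVder : ∀ t ∈ Icc (0:ℝ) τ, HasDerivAt V (g t) t := by
      intro t ht
      have hy : HasDerivAt (fun u => T' (xb i u)) (A' (xb i t)) t := by
        have := T'.hasFDerivAt.comp_hasDerivAt t (hder i t ht.1)
        rw [hTeq i t ht.1] at this
        exact this
      have hPy : HasDerivAt (fun u => P (T' (xb i u))) (P (A' (xb i t))) t :=
        P.hasFDerivAt.comp_hasDerivAt t hy
      exact hy.inner ℝ hPy
    have hgcont : ContinuousOn g (Icc (0:ℝ) τ) := by
      have h1 : ContinuousOn (xb i) (Icc (0:ℝ) τ) := (hxbcont i).mono Icc_subset_Ici_self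
      exact ((T'.continuous.comp_continuousOn h1).inner
          ((P.continuous.comp A'.continuous).comp_continuousOn h1)).add
        ((A'.continuous.comp_continuousOn h1).inner
          ((P.continuous.comp T'.continuous).comp_continuousOn h1))
    have hgint : IntervalIntegrable g volume 0 τ :=
      (hgcont.mono (by rw [uIcc_of_le hτ])).intervalIntegrable
    have hBint : IntervalIntegrable (fun t => ‖B' (xb i t)‖ ^ 2) volume 0 τ := by
      have h1 : ContinuousOn (xb i) (Icc (0:ℝ) τ) := (hxbcont i).mono Icc_subset_Ici_self
      exact (((B'.continuous.comp_continuousOn h1).norm.pow 2).mono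
        (by rw [uIcc_of_le hτ])).intervalIntegrable
    have hftc : (∫ t in (0:ℝ)..τ, g t) = V τ - V 0 :=
      intervalIntegral.integral_eq_sub_of_hasDerivAt
        (fun t ht => hVder t (by rwa [uIcc_of_le hτ] at ht)) hgint
    have hmono : (∫ t in (0:ℝ)..τ, ‖B' (xb i t)‖ ^ 2) ≤ ∫ t in (0:ℝ)..τ, -g t := by
      refine intervalIntegral.integral_mono_on hτ hBint hgint.neg ?_
      intro t _
      have h1 := hLPI (xb i t)
      have h2 : g t = 2 * ⟪P (T' (xb i t)), A' (xb i t)⟫ := by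
        simp only [hgdef]
        rw [← hPinner (T' (xb i t)) (A' (xb i t)), real_inner_comm (A' (xb i t))]
        ring
      rw [h2]
      linarith
    have hV0 : V 0 = ⟪C' (e i), P (C' (e i))⟫ := by
      show ⟪T' (xb i 0), P (T' (xb i 0))⟫ = _
      rw [hinit i]
    have hVτ : 0 ≤ V τ :=
      le_trans (mul_nonneg hε.le (sq_nonneg _)) (hPpos (T' (xb i τ)))
    calc (∫ t in (0:ℝ)..τ, ‖B' (xb i t)‖ ^ 2) ≤ ∫ t in (0:ℝ)..τ, -g t := hmono
      _ = -(V τ - V 0) := by rw [intervalIntegral.integral_neg, hftc]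
      _ ≤ V 0 := by linarith
      _ = _ := hV0
  -- Step 2: duality identity
  have hdual : ∀ (i : Fin p) (s : ℝ), 0 ≤ s →
      ⟪C (x s), e i⟫ = ⟪u₀, B' (xb i s)⟫ := by
    intro i s hs
    set f : ℝ → ℝ := fun t => ⟪x t, T' (xb i (s - t))⟫ with hfdef
    have hxbc : ContinuousOn (fun t => xb i (s - t)) (Icc (0:ℝ) s) := by
      refine (hxbcont i).comp (by fun_prop) ?_
      intro t ht
      exact sub_nonneg.2 ht.2
    have hfcont : ContinuousOn f (Icc (0:ℝ) s) :=
      (hxcont.mono Icc_subset_Ici_self).inner (T'.continuous.comp_continuousOn hxbc)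
    have hfder : ∀ t ∈ Ico (0:ℝ) s, HasDerivWithinAt f 0 (Ici t) t := by
      intro t ht
      have hst : (0:ℝ) ≤ s - t := by linarith [ht.2]
      have h1 : HasDerivAt (fun u : ℝ => s - u) (-1) t := by
        simpa using (hasDerivAt_id t).const_sub s
      have h2 : HasDerivAt (fun u => xb i (s - u)) (-(xb' i (s - t))) t := by
        have := HasDerivAt.scomp t (hder i (s - t) hst) h1
        simpa [Function.comp_def] using this
      have h3 : HasDerivAt (fun u => T' (xb i (s - u))) (-(A' (xb i (s - t)))) t := by
        have := T'.hasFDerivAt.comp_hasDerivAt t h2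
        simpa [hTeq i (s - t) hst, Function.comp_def] using this
      have h4 := (hx t ht.1).inner ℝ h3
      have h5 : ⟪x t, -(A' (xb i (s - t)))⟫ + ⟪x' t, T' (xb i (s - t))⟫ = 0 := by
        rw [inner_neg_right, hT'def, hA'def, ContinuousLinearMap.adjoint_inner_right,
          ContinuousLinearMap.adjoint_inner_right, hxeq t ht.1]
        ring
      rw [h5] at h4
      exact h4.hasDerivWithinAt
    have hconst := constant_of_has_deriv_right_zero hfcont hfder s (right_mem_Icc.2 hs)
    have hfs : f s = ⟪C (x s), e i⟫ := by
      simp only [hfdef, sub_self, hinit i, hC'def]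
      exact ContinuousLinearMap.adjoint_inner_right C (x s) (e i)
    have hf0 : f 0 = ⟪u₀, B' (xb i s)⟫ := by
      simp only [hfdef, sub_zero]
      rw [hT'def, ContinuousLinearMap.adjoint_inner_right, hx0, hB'def,
        ← ContinuousLinearMap.adjoint_inner_right B]
    rw [← hfs, hconst, hf0]
  -- pointwise bound
  have hpt : ∀ s : ℝ, 0 ≤ s →
      ‖C (x s)‖ ^ 2 ≤ ∑ i, ‖u₀‖ ^ 2 * ‖B' (xb i s)‖ ^ 2 := by
    intro s hs
    have h1 : ‖C (x s)‖ ^ 2 = ∑ i, ⟪C (x s), e i⟫ * ⟪e i, C (x s)⟫ := by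
      rw [e.sum_inner_mul_inner, real_inner_self_eq_norm_sq]
    rw [h1]
    refine Finset.sum_le_sum fun i _ => ?_
    have hCxi : ⟪C (x s), e i⟫ = ⟪u₀, B' (xb i s)⟫ := hdual i s hs
    have hCxi' : ⟪e i, C (x s)⟫ = ⟪u₀, B' (xb i s)⟫ :=
      (real_inner_comm (C (x s)) (e i)).trans hCxi
    have h2 : ⟪C (x s), e i⟫ * ⟪e i, C (x s)⟫ = ⟪u₀, B' (xb i s)⟫ ^ 2 := by
      rw [hCxi, hCxi']; ring
    rw [h2]
    calc ⟪u₀, B' (xb i s)⟫ ^ 2 ≤ (‖u₀‖ * ‖B' (xb i s)‖) ^ 2 := by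
          rw [← sq_abs]
          exact pow_le_pow_left₀ (abs_nonneg _) (abs_real_inner_le_norm _ _) 2
      _ = ‖u₀‖ ^ 2 * ‖B' (xb i s)‖ ^ 2 := by ring
  -- finite-time bound
  have hfin : ∀ τ : ℝ, 0 ≤ τ →
      (∫ s in (0:ℝ)..τ, ‖C (x s)‖ ^ 2) ≤ γ ^ 2 * ‖u₀‖ ^ 2 := by
    intro τ hτ
    have hBint : ∀ i : Fin p, IntervalIntegrable (fun t => ‖B' (xb i t)‖ ^ 2) volume 0 τ := by
      intro i
      have h1 : ContinuousOn (xb i) (Icc (0:ℝ) τ) := (hxbcont i).mono Icc_subset_Ici_self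
      exact (((B'.continuous.comp_continuousOn h1).norm.pow 2).mono
        (by rw [uIcc_of_le hτ])).intervalIntegrable
    have hCint : IntervalIntegrable (fun s => ‖C (x s)‖ ^ 2) volume 0 τ := by
      have h1 : ContinuousOn x (Icc (0:ℝ) τ) := hxcont.mono Icc_subset_Ici_self
      exact (((C.continuous.comp_continuousOn h1).norm.pow 2).mono
        (by rw [uIcc_of_le hτ])).intervalIntegrable
    have hSint : IntervalIntegrable (fun s => ∑ i, ‖u₀‖ ^ 2 * ‖B' (xb i s)‖ ^ 2) volume 0 τ := by
      refine (ContinuousOn.mono ?_ (by rw [uIcc_of_le hτ])).intervalIntegrable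
      refine continuousOn_finset_sum _ fun i _ => continuousOn_const.mul ?_
      exact ((B'.continuous.comp_continuousOn
        ((hxbcont i).mono Icc_subset_Ici_self)).norm.pow 2)
    have h1 : (∫ s in (0:ℝ)..τ, ‖C (x s)‖ ^ 2)
        ≤ ∫ s in (0:ℝ)..τ, ∑ i, ‖u₀‖ ^ 2 * ‖B' (xb i s)‖ ^ 2 :=
      intervalIntegral.integral_mono_on hτ hCint hSint fun s hs => hpt s hs.1
    have h2 : (∫ s in (0:ℝ)..τ, ∑ i, ‖u₀‖ ^ 2 * ‖B' (xb i s)‖ ^ 2)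
        = ∑ i, ‖u₀‖ ^ 2 * ∫ s in (0:ℝ)..τ, ‖B' (xb i s)‖ ^ 2 := by
      rw [intervalIntegral.integral_finset_sum fun i _ => (hBint i).const_mul _]
      exact Finset.sum_congr rfl fun i _ => intervalIntegral.integral_const_mul _ _
    have h3 : (∑ i, ‖u₀‖ ^ 2 * ∫ s in (0:ℝ)..τ, ‖B' (xb i s)‖ ^ 2)
        ≤ ∑ i, ‖u₀‖ ^ 2 * ⟪C' (e i), P (C' (e i))⟫ := by
      refine Finset.sum_le_sum fun i _ => ?_
      exact mul_le_mul_of_nonneg_left (hGram i τ hτ) (sq_nonneg _)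
    have htr : (∑ i, ⟪C' (e i), P (C' (e i))⟫) ≤ γ ^ 2 := by
      rw [euclidean_trace_eq_sum_inner, ← hedef] at htrace
      refine le_trans (le_of_eq ?_) htrace
      refine Finset.sum_congr rfl fun i _ => ?_
      simp only [ContinuousLinearMap.coe_coe, ContinuousLinearMap.comp_apply, hC'def]
      exact ContinuousLinearMap.adjoint_inner_left C (P (ContinuousLinearMap.adjoint C (e i))) (e i)
    calc (∫ s in (0:ℝ)..τ, ‖C (x s)‖ ^ 2) ≤ _ := h1
      _ = _ := h2
      _ ≤ ∑ i, ‖u₀‖ ^ 2 * ⟪C' (e i), P (C' (e i))⟫ := h3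
      _ = ‖u₀‖ ^ 2 * ∑ i, ⟪C' (e i), P (C' (e i))⟫ := by rw [Finset.mul_sum]
      _ ≤ ‖u₀‖ ^ 2 * γ ^ 2 := by
          refine mul_le_mul_of_nonneg_left htr (sq_nonneg _)
      _ = γ ^ 2 * ‖u₀‖ ^ 2 := by ring
  -- limit τ → ∞
  by_cases hint : IntegrableOn (fun t => ‖C (x t)‖ ^ 2) (Ioi (0:ℝ)) volume
  · have hUnion : (⋃ n : ℕ, Ioc (0:ℝ) n) = Ioi (0:ℝ) := by
      ext t
      simp only [mem_iUnion, mem_Ioc, mem_Ioi]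
      constructor
      · rintro ⟨n, h1, _⟩; exact h1
      · intro h1
        obtain ⟨n, hn⟩ := exists_nat_ge t
        exact ⟨n, h1, hn⟩
    have hmonoS : Monotone fun n : ℕ => Ioc (0:ℝ) n := fun m n hmn =>
      Ioc_subset_Ioc_right (Nat.cast_le.2 hmn)
    have htendsto := tendsto_setIntegral_of_monotone (fun n : ℕ => measurableSet_Ioc)
      hmonoS (by rwa [hUnion])
    rw [← hUnion]
    refine le_of_tendsto htendsto (Filter.Eventually.of_forall fun n => ?_)
    rw [← intervalIntegral.integral_of_le (by positivity : (0:ℝ) ≤ (n:ℝ))]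
    exact hfin n (by positivity)
  · rw [MeasureTheory.integral_undef hint]
    positivity
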